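/- Let θ(t) = (2n−1)·ψ(t) for t ∈ [b_{2n−2}, b_{2n}) as in Theorem 3.6, i.e. θ is 0 on [b_{2n−2}, a_{2n−1}), equals (2n−1)(t − a_{2n−1})/(b_{2n−1} − a_{2n−1}) on [a_{2n−1}, b_{2n−1}), equals 2n−1 on [b_{2n−1}, a_{2n}), and equals (2n−1)(b_{2n} − t)/(b_{2n} − a_{2n}) on [a_{2n}, b_{2n}). Then for every n ≥ 3, if t ∈ [a_{2n−1}, a_{2n+1}) and |u − t| ≤ t^(1/k), one has |θ(t) − θ(u)| < ℓ(2n−1), where ℓ(t) = t/2^t. -/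

import Mathlib

lemma stmt16_rpow_le_self {x : ℝ} (hx : 1 ≤ x) {e : ℝ} (he0 : 0 ≤ e) (he : e ≤ 1) :
    x ^ e ≤ x := by
  calc x ^ e ≤ x ^ (1:ℝ) := Real.rpow_le_rpow_of_exponent_le hx he
  _ = x := Real.rpow_one x

lemma stmt16_rpow_sub_le (k : ℕ) (hk : 1 ≤ k) {x y : ℝ} (hx : 1 ≤ x) (hxy : x ≤ y) :
    y ^ ((1:ℝ)/k) - x ^ ((1:ℝ)/k) ≤ y - x := by
  have hk0 : (0:ℝ) < k := by exact_mod_cast hk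
  have hx0 : (0:ℝ) < x := by linarith
  set s : ℝ := (y - x) / (k * x) with hs
  have hs0 : 0 ≤ s := div_nonneg (by linarith) (by positivity)
  have hbern : 1 + (k:ℝ) * s ≤ (1 + s) ^ k := one_add_mul_le_pow (by linarith) k
  have hks : (k:ℝ) * s = (y - x) / x := by
    rw [hs]; field_simp
  have h1 : y ≤ x * (1 + s) ^ k := by
    have : x * (1 + (k:ℝ) * s) = y := by rw [hks]; field_simp; ring
    nlinarith [mul_le_mul_of_nonneg_left hbern hx0.le]
  have h2 : y ^ ((1:ℝ)/k) ≤ (x * (1 + s) ^ k) ^ ((1:ℝ)/k) :=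
    Real.rpow_le_rpow (by linarith) h1 (by positivity)
  have h3 : (x * (1 + s) ^ k) ^ ((1:ℝ)/k) = x ^ ((1:ℝ)/k) * (1 + s) := by
    rw [Real.mul_rpow hx0.le (by positivity), ← Real.rpow_natCast (1 + s) k,
      ← Real.rpow_mul (by positivity)]
    rw [show (k:ℝ) * ((1:ℝ)/k) = 1 by field_simp, Real.rpow_one]
  have h4 : x ^ ((1:ℝ)/k) * s ≤ y - x := by
    have hxk : x ^ ((1:ℝ)/k) ≤ (k:ℝ) * x := by
      have h5 : x ^ ((1:ℝ)/k) ≤ x := stmt16_rpow_le_self hx (by positivity)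
        (by rw [div_le_one hk0]; exact_mod_cast hk)
      have h6 : (1:ℝ) ≤ (k:ℝ) := by exact_mod_cast hk
      nlinarith [mul_le_mul_of_nonneg_right h6 hx0.le]
    calc x ^ ((1:ℝ)/k) * s ≤ ((k:ℝ) * x) * s := mul_le_mul_of_nonneg_right hxk hs0
    _ = y - x := by rw [hs]; field_simp
  nlinarith [h2, h3, h4, Real.rpow_nonneg hx0.le ((1:ℝ)/k)]

lemma stmt16_frac_helper {c d e D P : ℝ} (hc : 0 < c) (hd : d ≤ e) (he : 0 ≤ e)
    (hP : 0 < P) (hD : P * e < D) : c * d / D < c / P := by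
  have hD0 : 0 < D := lt_of_le_of_lt (by positivity) hD
  rw [div_lt_div_iff₀ hD0 hP]
  nlinarith [mul_le_mul_of_nonneg_right (mul_le_mul_of_nonneg_left hd hc.le) hP.le,
    mul_lt_mul_of_pos_left hD hc]

set_option maxHeartbeats 3200000 in
/-- Claim 3.6.1: for the piecewise map `θ` of Theorem 3.6 (equal to
`(2n−1)·ψ` on `[b_{2n−2}, b_{2n})`), if `n ≥ 3`, `t ∈ [a_{2n−1}, a_{2n+1})`
and `|u − t| ≤ t ^ (1/k)`, then `|θ(t) − θ(u)| < ℓ(2n−1)` where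
`ℓ(x) = x / 2 ^ x`. -/
theorem stmt16 (k : ℕ) (hk : 3 ≤ k) (a b : ℕ → ℝ)
    (hb0 : b 0 = 0)
    (hord : ∀ n, 1 ≤ n → b (n - 1) < a n ∧ a n < b n)
    (h1 : ∀ n, 1 ≤ n → (a n) ^ ((1:ℝ)/k) > 2 ^ n)
    (h2 : ∀ n, 1 ≤ n → b (n - 1) + (b (n - 1)) ^ ((1:ℝ)/k) < a n)
    (h4 : ∀ n, 1 ≤ n → b n = a n + (a n) ^ ((2:ℝ)/k))
    (h6 : ∀ n, 1 ≤ n → a n - b (n - 1) > 2 ^ (n - 1) * (a n) ^ ((1:ℝ)/k))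
    (h7 : ∀ n, 1 ≤ n → b n - a n > 2 ^ n * (b n) ^ ((1:ℝ)/k))
    (θ : ℝ → ℝ)
    (hθ0 : ∀ n, 1 ≤ n → ∀ t, b (2*n - 2) ≤ t → t < a (2*n - 1) → θ t = 0)
    (hθup : ∀ n, 1 ≤ n → ∀ t, a (2*n - 1) ≤ t → t < b (2*n - 1) →
      θ t = (2*(n:ℝ) - 1) * (t - a (2*n - 1)) / (b (2*n - 1) - a (2*n - 1)))
    (hθtop : ∀ n, 1 ≤ n → ∀ t, b (2*n - 1) ≤ t → t < a (2*n) →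
      θ t = 2*(n:ℝ) - 1)
    (hθdown : ∀ n, 1 ≤ n → ∀ t, a (2*n) ≤ t → t < b (2*n) →
      θ t = (2*(n:ℝ) - 1) * (b (2*n) - t) / (b (2*n) - a (2*n))) :
    ∀ n, 3 ≤ n → ∀ t u : ℝ, 0 ≤ u →
      a (2*n - 1) ≤ t → t < a (2*n + 1) → |u - t| ≤ t ^ ((1:ℝ)/k) →
      |θ t - θ u| < (2*(n:ℝ) - 1) / 2 ^ (2*n - 1) := by
  intro n hn t u hu ht1 ht2 htu
  have hn1 : 1 ≤ n := by omega
  have hn3 : (3:ℝ) ≤ (n:ℝ) := by exact_mod_cast hn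
  have hkpos : (0:ℝ) < k := by positivity
  have hk0 : (0:ℝ) ≤ 1/(k:ℝ) := by positivity
  have hk1 : (1:ℝ)/k ≤ 1 := by
    rw [div_le_one hkpos]; exact_mod_cast (by omega : 1 ≤ k)
  have hc : (0:ℝ) < 2*(n:ℝ) - 1 := by linarith
  -- positivity of the sequence
  have hab : ∀ m, 1 ≤ m → 0 < a m ∧ a m < b m := by
    intro m hm
    induction m with
    | zero => omega
    | succ p ih =>
      rcases Nat.eq_zero_or_pos p with hp | hp
      · subst hp
        refine ⟨?_, (hord 1 le_rfl).2⟩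
        have := (hord 1 le_rfl).1
        simpa [hb0] using this
      · have h := ih hp
        have h2' := (hord (p+1) (by omega)).1
        have h3' := (hord (p+1) (by omega)).2
        simp only [Nat.add_sub_cancel] at h2'
        exact ⟨by linarith [h.1, h.2], h3'⟩
  have ha_gt1 : ∀ m, 1 ≤ m → 1 < a m := by
    intro m hm
    by_contra hcon
    push_neg at hcon
    have hle : a m ^ ((1:ℝ)/k) ≤ 1 := Real.rpow_le_one (hab m hm).1.le hcon hk0
    have hgt := h1 m hm
    have h2m : (2:ℝ) ≤ 2 ^ m := by
      have : (2:ℕ)^1 ≤ 2^m := Nat.pow_le_pow_right (by norm_num) hm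
      exact_mod_cast this
    linarith
  -- ordering facts
  have ord1 : b (2*n-2) < a (2*n-1) := by
    have := (hord (2*n-1) (by omega)).1
    rwa [show 2*n-1-1 = 2*n-2 from by omega] at this
  have ord2 : a (2*n-1) < b (2*n-1) := (hord (2*n-1) (by omega)).2
  have ord3 : b (2*n-1) < a (2*n) := (hord (2*n) (by omega)).1
  have ord4 : a (2*n) < b (2*n) := (hord (2*n) (by omega)).2
  have ord5 : b (2*n) < a (2*n+1) := by
    have := (hord (2*n+1) (by omega)).1
    rwa [show 2*n+1-1 = 2*n from by omega] at this
  have ord6 : a (2*n+1) < b (2*n+1) := (hord (2*n+1) (by omega)).2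
  have g1 : 1 < a (2*n-1) := ha_gt1 _ (by omega)
  have ht0 : (0:ℝ) < t := by linarith
  -- main inequalities
  have F1 := h7 (2*n-1) (by omega)
  have F2 := h7 (2*n) (by omega)
  have F3 := h7 (2*n+1) (by omega)
  have F4 : a (2*n-1) - b (2*n-2) > 2^(2*n-2) * (a (2*n-1)) ^ ((1:ℝ)/k) := by
    have := h6 (2*n-1) (by omega)
    rwa [show 2*n-1-1 = 2*n-2 from by omega] at this
  have F5 := h6 (2*n) (by omega)
  have F6 : a (2*n+1) - b (2*n) > 2^(2*n) * (a (2*n+1)) ^ ((1:ℝ)/k) := by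
    have := h6 (2*n+1) (by omega)
    rwa [show 2*n+1-1 = 2*n from by omega] at this
  have F7 := h2 (2*n) (by omega)
  have F8 : b (2*n) + (b (2*n)) ^ ((1:ℝ)/k) < a (2*n+1) := by
    have := h2 (2*n+1) (by omega)
    rwa [show 2*n+1-1 = 2*n from by omega] at this
  -- rpow basics
  have rp_nonneg : ∀ x : ℝ, 0 ≤ x → 0 ≤ x ^ ((1:ℝ)/k) :=
    fun x hx => Real.rpow_nonneg hx _
  have rp_mono : ∀ x y : ℝ, 0 ≤ x → x ≤ y → x^((1:ℝ)/k) ≤ y^((1:ℝ)/k) :=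
    fun x y hx hxy => Real.rpow_le_rpow hx hxy hk0
  have htk0 : 0 ≤ t ^ ((1:ℝ)/k) := rp_nonneg t ht0.le
  obtain ⟨hul, hur⟩ := abs_le.mp htu
  have hu1 : t - t ^ ((1:ℝ)/k) ≤ u := by linarith
  have hu2 : u ≤ t + t ^ ((1:ℝ)/k) := by linarith
  -- b ≤ 2a and b^{1/k} ≤ 2 a^{1/k}
  have hbk2 : ∀ m, 1 ≤ m → (b m) ^ ((1:ℝ)/k) ≤ 2 * (a m) ^ ((1:ℝ)/k) := by
    intro m hm
    have ham := (hab m hm).1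
    have ha1 := ha_gt1 m hm
    have hb2a : b m ≤ 2 * a m := by
      rw [h4 m hm]
      have h2k1 : (2:ℝ)/k ≤ 1 := by
        rw [div_le_one hkpos]; exact_mod_cast (by omega : 2 ≤ k)
      have := stmt16_rpow_le_self ha1.le (by positivity : (0:ℝ) ≤ 2/(k:ℝ)) h2k1
      linarith
    have hbm0 : (0:ℝ) ≤ b m := by linarith [(hab m hm).2]
    calc (b m) ^ ((1:ℝ)/k) ≤ (2 * a m) ^ ((1:ℝ)/k) := rp_mono _ _ hbm0 hb2a
    _ = 2 ^ ((1:ℝ)/k) * (a m) ^ ((1:ℝ)/k) := Real.mul_rpow (by norm_num) ham.le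
    _ ≤ 2 * (a m) ^ ((1:ℝ)/k) := by
        have := stmt16_rpow_le_self (x := 2) (by norm_num) hk0 hk1
        exact mul_le_mul_of_nonneg_right this (rp_nonneg _ ham.le)
  -- powers of two
  have hP1 : (1:ℝ) ≤ 2^(2*n-1) := by
    have : (1:ℕ) ≤ 2^(2*n-1) := Nat.one_le_two_pow
    exact_mod_cast this
  have hP1' : (1:ℝ) ≤ 2^(2*n) := by
    have : (1:ℕ) ≤ 2^(2*n) := Nat.one_le_two_pow
    exact_mod_cast this
  have hP1'' : (1:ℝ) ≤ 2^(2*n+1) := by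
    have : (1:ℕ) ≤ 2^(2*n+1) := Nat.one_le_two_pow
    exact_mod_cast this
  have hP2 : (2:ℝ) ≤ 2^(2*n-2) := by
    have : (2:ℕ)^1 ≤ 2^(2*n-2) := Nat.pow_le_pow_right (by norm_num) (by omega)
    exact_mod_cast this
  have hP3 : (2:ℝ) ≤ 2^(2*n-1) := by
    have : (2:ℕ)^1 ≤ 2^(2*n-1) := Nat.pow_le_pow_right (by norm_num) (by omega)
    exact_mod_cast this
  have hP4 : (2:ℝ)^(2*n-1) ≤ 2^(2*n) := by
    have : (2:ℕ)^(2*n-1) ≤ 2^(2*n) := Nat.pow_le_pow_right (by norm_num) (by omega)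
    exact_mod_cast this
  have hPpos : (0:ℝ) < 2^(2*n-1) := by positivity
  -- nonneg of the relevant rpows
  have hA1k := rp_nonneg (a (2*n-1)) (by linarith)
  have hB1k0 := rp_nonneg (b (2*n-1)) (by linarith)
  have hA2k0 := rp_nonneg (a (2*n)) (by linarith)
  have hB2k0 := rp_nonneg (b (2*n)) (by linarith)
  have hA3k0 := rp_nonneg (a (2*n+1)) (by linarith)
  have hB3k0 := rp_nonneg (b (2*n+1)) (by linarith)
  have hD1pos : (0:ℝ) < b (2*n-1) - a (2*n-1) := by linarith
  have hD2pos : (0:ℝ) < b (2*n) - a (2*n) := by linarith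
  have hD3pos : (0:ℝ) < b (2*n+1) - a (2*n+1) := by linarith
  have hB1k2 : (b (2*n-1)) ^ ((1:ℝ)/k) ≤ 2 * (a (2*n-1)) ^ ((1:ℝ)/k) :=
    hbk2 _ (by omega)
  have hB2k2 : (b (2*n)) ^ ((1:ℝ)/k) ≤ 2 * (a (2*n)) ^ ((1:ℝ)/k) :=
    hbk2 _ (by omega)
  -- adjusted D-inequalities for P = 2^(2n-1)
  have F2' : 2^(2*n-1) * (b (2*n)) ^ ((1:ℝ)/k) < b (2*n) - a (2*n) :=
    lt_of_le_of_lt (mul_le_mul_of_nonneg_right hP4 hB2k0) F2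
  rcases lt_or_ge t (b (2*n-1)) with hA | hB1t
  · -- Case A : t in the up-ramp
    have hθt := hθup n hn1 t ht1 hA
    have htkB1 : t ^ ((1:ℝ)/k) ≤ (b (2*n-1)) ^ ((1:ℝ)/k) := rp_mono _ _ ht0.le hA.le
    have h2A1 : (2:ℝ) * (a (2*n-1)) ^ ((1:ℝ)/k) ≤ 2^(2*n-2) * (a (2*n-1)) ^ ((1:ℝ)/k) :=
      mul_le_mul_of_nonneg_right hP2 hA1k
    have huBm : b (2*n-2) ≤ u := by linarith only [hu1, ht1, htkB1, hB1k2, h2A1, F4]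
    rcases lt_or_ge u (a (2*n-1)) with hu' | hu'
    · have hθu : θ u = 0 := hθ0 n hn1 u huBm hu'
      have hdiff : θ t - θ u = (2*(n:ℝ)-1) * (t - a (2*n-1)) / (b (2*n-1) - a (2*n-1)) := by
        rw [hθt, hθu]; ring
      rw [hdiff, abs_div, abs_mul, abs_of_pos hc, abs_of_pos hD1pos]
      have hX : |t - a (2*n-1)| ≤ (b (2*n-1)) ^ ((1:ℝ)/k) := by
        rw [abs_of_nonneg (by linarith only [ht1])]
        linarith only [hu1, hu', htkB1]
      exact stmt16_frac_helper hc hX hB1k0 hPpos F1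
    · rcases lt_or_ge u (b (2*n-1)) with hu'' | hu''
      · have hθu := hθup n hn1 u hu' hu''
        have hdiff : θ t - θ u = (2*(n:ℝ)-1) * (t - u) / (b (2*n-1) - a (2*n-1)) := by
          rw [hθt, hθu]; ring
        rw [hdiff, abs_div, abs_mul, abs_of_pos hc, abs_of_pos hD1pos]
        have hX : |t - u| ≤ (b (2*n-1)) ^ ((1:ℝ)/k) := by
          rw [abs_sub_comm]; exact le_trans htu htkB1
        exact stmt16_frac_helper hc hX hB1k0 hPpos F1
      · have huA2 : u < a (2*n) := by linarith only [hu2, hA, htkB1, F7]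
        have hθu := hθtop n hn1 u hu'' huA2
        have hdiff : θ t - θ u = (2*(n:ℝ)-1) * (t - b (2*n-1)) / (b (2*n-1) - a (2*n-1)) := by
          rw [hθt, hθu]; field_simp; ring
        rw [hdiff, abs_div, abs_mul, abs_of_pos hc, abs_of_pos hD1pos]
        have hX : |t - b (2*n-1)| ≤ (b (2*n-1)) ^ ((1:ℝ)/k) := by
          rw [abs_of_nonpos (by linarith only [hA])]
          linarith only [hu'', hur, htkB1]
        exact stmt16_frac_helper hc hX hB1k0 hPpos F1
  · rcases lt_or_ge t (a (2*n)) with hB | hA2t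
    · -- Case B : t in the flat top part
      have hθt := hθtop n hn1 t hB1t hB
      have htkA2 : t ^ ((1:ℝ)/k) ≤ (a (2*n)) ^ ((1:ℝ)/k) := rp_mono _ _ ht0.le hB.le
      rcases lt_or_ge u (b (2*n-1)) with hu' | hu'
      · have hsub := stmt16_rpow_sub_le k (by omega)
          (show (1:ℝ) ≤ b (2*n-1) by linarith only [g1, ord2]) hB1t
        have hd : b (2*n-1) - u ≤ (b (2*n-1)) ^ ((1:ℝ)/k) := by linarith only [hsub, hu1]
        have h1B : (1:ℝ) * (b (2*n-1)) ^ ((1:ℝ)/k) ≤ 2^(2*n-1) * (b (2*n-1)) ^ ((1:ℝ)/k) :=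
          mul_le_mul_of_nonneg_right hP1 hB1k0
        have huA1 : a (2*n-1) ≤ u := by linarith only [hd, h1B, F1]
        have hθu := hθup n hn1 u huA1 hu'
        have hdiff : θ t - θ u = (2*(n:ℝ)-1) * (b (2*n-1) - u) / (b (2*n-1) - a (2*n-1)) := by
          rw [hθt, hθu]; field_simp; ring
        rw [hdiff, abs_div, abs_mul, abs_of_pos hc, abs_of_pos hD1pos]
        have hX : |b (2*n-1) - u| ≤ (b (2*n-1)) ^ ((1:ℝ)/k) := by
          rw [abs_of_nonneg (by linarith only [hu'])]; exact hd
        exact stmt16_frac_helper hc hX hB1k0 hPpos F1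
      · rcases lt_or_ge u (a (2*n)) with hu'' | hu''
        · have hθu := hθtop n hn1 u hu' hu''
          rw [hθt, hθu, sub_self, abs_zero]
          exact div_pos hc hPpos
        · have hA2B2 : (a (2*n)) ^ ((1:ℝ)/k) ≤ (b (2*n)) ^ ((1:ℝ)/k) :=
            rp_mono _ _ (by linarith only [g1, ord2, ord3]) ord4.le
          have h1B2 : (1:ℝ) * (b (2*n)) ^ ((1:ℝ)/k) ≤ 2^(2*n) * (b (2*n)) ^ ((1:ℝ)/k) :=
            mul_le_mul_of_nonneg_right hP1' hB2k0
          have huB2 : u < b (2*n) := by linarith only [hu2, htkA2, hA2B2, h1B2, F2, hB]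
          have hθu := hθdown n hn1 u hu'' huB2
          have hdiff : θ t - θ u = (2*(n:ℝ)-1) * (u - a (2*n)) / (b (2*n) - a (2*n)) := by
            rw [hθt, hθu]; field_simp; ring
          rw [hdiff, abs_div, abs_mul, abs_of_pos hc, abs_of_pos hD2pos]
          have hX : |u - a (2*n)| ≤ (b (2*n)) ^ ((1:ℝ)/k) := by
            rw [abs_of_nonneg (by linarith only [hu''])]
            linarith only [hur, hB, htkA2, hA2B2]
          exact stmt16_frac_helper hc hX hB2k0 hPpos F2'
    · rcases lt_or_ge t (b (2*n)) with hC | hB2t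
      · -- Case C : t in the down-ramp
        have hθt := hθdown n hn1 t hA2t hC
        have htkB2 : t ^ ((1:ℝ)/k) ≤ (b (2*n)) ^ ((1:ℝ)/k) := rp_mono _ _ ht0.le hC.le
        have h2A2 : (2:ℝ) * (a (2*n)) ^ ((1:ℝ)/k) ≤ 2^(2*n-1) * (a (2*n)) ^ ((1:ℝ)/k) :=
          mul_le_mul_of_nonneg_right hP3 hA2k0
        have huB1 : b (2*n-1) ≤ u := by linarith only [hu1, hA2t, htkB2, hB2k2, h2A2, F5]
        rcases lt_or_ge u (a (2*n)) with hu' | hu'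
        · have hθu := hθtop n hn1 u huB1 hu'
          have hdiff : θ t - θ u = (2*(n:ℝ)-1) * (a (2*n) - t) / (b (2*n) - a (2*n)) := by
            rw [hθt, hθu]; field_simp; ring
          rw [hdiff, abs_div, abs_mul, abs_of_pos hc, abs_of_pos hD2pos]
          have hX : |a (2*n) - t| ≤ (b (2*n)) ^ ((1:ℝ)/k) := by
            rw [abs_of_nonpos (by linarith only [hA2t])]
            linarith only [hu1, hu', htkB2]
          exact stmt16_frac_helper hc hX hB2k0 hPpos F2'
        · rcases lt_or_ge u (b (2*n)) with hu'' | hu''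
          · have hθu := hθdown n hn1 u hu' hu''
            have hdiff : θ t - θ u = (2*(n:ℝ)-1) * (u - t) / (b (2*n) - a (2*n)) := by
              rw [hθt, hθu]; field_simp; ring
            rw [hdiff, abs_div, abs_mul, abs_of_pos hc, abs_of_pos hD2pos]
            have hX : |u - t| ≤ (b (2*n)) ^ ((1:ℝ)/k) := le_trans htu htkB2
            exact stmt16_frac_helper hc hX hB2k0 hPpos F2'
          · have huA3 : u < a (2*n+1) := by linarith only [hu2, hC, htkB2, F8]
            have hθu : θ u = 0 := by
              have h := hθ0 (n+1) (by omega) u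
              rw [show 2*(n+1) - 2 = 2*n from by omega,
                show 2*(n+1) - 1 = 2*n+1 from by omega] at h
              exact h hu'' huA3
            have hdiff : θ t - θ u = (2*(n:ℝ)-1) * (b (2*n) - t) / (b (2*n) - a (2*n)) := by
              rw [hθt, hθu]; ring
            rw [hdiff, abs_div, abs_mul, abs_of_pos hc, abs_of_pos hD2pos]
            have hX : |b (2*n) - t| ≤ (b (2*n)) ^ ((1:ℝ)/k) := by
              rw [abs_of_nonneg (by linarith only [hC])]
              linarith only [hu'', hur, htkB2]
            exact stmt16_frac_helper hc hX hB2k0 hPpos F2'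
      · -- Case D : t in the flat zero part
        have hθt : θ t = 0 := by
          have h := hθ0 (n+1) (by omega) t
          rw [show 2*(n+1) - 2 = 2*n from by omega,
            show 2*(n+1) - 1 = 2*n+1 from by omega] at h
          exact h hB2t ht2
        rcases lt_or_ge u (b (2*n)) with hu' | hu'
        · have hsub := stmt16_rpow_sub_le k (by omega)
            (show (1:ℝ) ≤ b (2*n) by linarith only [g1, ord2, ord3, ord4]) hB2t
          have hd : b (2*n) - u ≤ (b (2*n)) ^ ((1:ℝ)/k) := by linarith only [hsub, hu1]
          have h1B2 : (1:ℝ) * (b (2*n)) ^ ((1:ℝ)/k) ≤ 2^(2*n) * (b (2*n)) ^ ((1:ℝ)/k) :=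
            mul_le_mul_of_nonneg_right hP1' hB2k0
          have huA2 : a (2*n) ≤ u := by linarith only [hd, h1B2, F2]
          have hθu := hθdown n hn1 u huA2 hu'
          have hdiff : θ t - θ u = (2*(n:ℝ)-1) * (u - b (2*n)) / (b (2*n) - a (2*n)) := by
            rw [hθt, hθu]; ring
          rw [hdiff, abs_div, abs_mul, abs_of_pos hc, abs_of_pos hD2pos]
          have hX : |u - b (2*n)| ≤ (b (2*n)) ^ ((1:ℝ)/k) := by
            rw [abs_of_nonpos (by linarith only [hu'])]
            linarith only [hd]
          exact stmt16_frac_helper hc hX hB2k0 hPpos F2'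
        · rcases lt_or_ge u (a (2*n+1)) with hu'' | hu''
          · have hθu : θ u = 0 := by
              have h := hθ0 (n+1) (by omega) u
              rw [show 2*(n+1) - 2 = 2*n from by omega,
                show 2*(n+1) - 1 = 2*n+1 from by omega] at h
              exact h hu' hu''
            rw [hθt, hθu, sub_self, abs_zero]
            exact div_pos hc hPpos
          · have htkA3 : t ^ ((1:ℝ)/k) ≤ (a (2*n+1)) ^ ((1:ℝ)/k) := rp_mono _ _ ht0.le ht2.le
            have hA3B3 : (a (2*n+1)) ^ ((1:ℝ)/k) ≤ (b (2*n+1)) ^ ((1:ℝ)/k) :=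
              rp_mono _ _ (by linarith only [g1, ord2, ord3, ord4, ord5]) ord6.le
            have h1B3 : (1:ℝ) * (b (2*n+1)) ^ ((1:ℝ)/k) ≤ 2^(2*n+1) * (b (2*n+1)) ^ ((1:ℝ)/k) :=
              mul_le_mul_of_nonneg_right hP1'' hB3k0
            have huB3 : u < b (2*n+1) := by
              linarith only [hu2, ht2, htkA3, hA3B3, h1B3, F3]
            have hθu : θ u = (2*((n:ℝ)+1) - 1) * (u - a (2*n+1)) / (b (2*n+1) - a (2*n+1)) := by
              have h := hθup (n+1) (by omega) u
              rw [show 2*(n+1) - 1 = 2*n+1 from by omega] at h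
              rw [h hu'' huB3]; push_cast; ring
            have hc' : (0:ℝ) < 2*((n:ℝ)+1) - 1 := by linarith only [hn3]
            have hdiff : θ t - θ u =
                (2*((n:ℝ)+1)-1) * (a (2*n+1) - u) / (b (2*n+1) - a (2*n+1)) := by
              rw [hθt, hθu]; ring
            rw [hdiff, abs_div, abs_mul, abs_of_pos hc', abs_of_pos hD3pos]
            have hX : |a (2*n+1) - u| ≤ (b (2*n+1)) ^ ((1:ℝ)/k) := by
              rw [abs_of_nonpos (by linarith only [hu''])]
              linarith only [hur, ht2, htkA3, hA3B3]
            refine lt_trans (stmt16_frac_helper hc' hX hB3k0 (by positivity) F3) ?_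
            rw [div_lt_div_iff₀ (by positivity) hPpos]
            rw [show (2:ℝ)^(2*n+1) = 4 * 2^(2*n-1) from by
              rw [show 2*n+1 = 2*n-1+2 from by omega, pow_add]; ring]
            linarith only [mul_pos (show (0:ℝ) < 6*(n:ℝ) - 5 by linarith only [hn3]) hPpos]
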